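/- The polynomial ξ_1²ξ_2² + ξ_1²ξ_2ξ_3 + ξ_1ξ_2²ξ_3 - ξ_1²ξ_3² - ξ_1ξ_2ξ_3² - ξ_2²ξ_3² is irreducible in ℚ[ξ_1, ξ_2, ξ_3]. -/

import Mathlib

open MvPolynomial

namespace StarBI

noncomputable section

abbrev R2 : Type := MvPolynomial (Fin 2) ℚ

def Aq : R2 := X 0 ^ 2 + X 0 * X 1 - X 1 ^ 2
def Bq : R2 := X 0 ^ 2 * X 1 - X 0 * X 1 ^ 2
def Cq : R2 := -(X 0 ^ 2 * X 1 ^ 2)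

lemma prime_X0 : Prime (X 0 : R2) := by
  have h : Prime ((finSuccEquiv ℚ 1) (X 0)) := by
    rw [finSuccEquiv_X_zero]; exact Polynomial.prime_X
  exact (MulEquiv.prime_iff (p := X 0) (finSuccEquiv ℚ 1).toMulEquiv).mp h

lemma prime_X1 : Prime (X 1 : R2) := by
  have h : Prime ((renameEquiv ℚ (Equiv.swap (0 : Fin 2) 1)) (X 1)) := by
    rw [renameEquiv_apply, rename_X, Equiv.swap_apply_right]
    exact prime_X0
  exact (MulEquiv.prime_iff (p := X 1) (renameEquiv ℚ (Equiv.swap (0 : Fin 2) 1)).toMulEquiv).mp h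

lemma hA_ne : Aq ≠ 0 := by
  intro h
  have := congrArg (eval ![(1 : ℚ), 0]) h
  simp [Aq] at this

lemma not_X0_dvd_A : ¬ (X 0 : R2) ∣ Aq := by
  rintro ⟨t, ht⟩
  have := congrArg (eval ![(0 : ℚ), 1]) ht
  simp [Aq] at this

lemma not_X1_dvd_A : ¬ (X 1 : R2) ∣ Aq := by
  rintro ⟨t, ht⟩
  have := congrArg (eval ![(1 : ℚ), 0]) ht
  simp [Aq] at this

def q : Polynomial R2 :=
  Polynomial.C Aq * Polynomial.X ^ 2 + Polynomial.C Bq * Polynomial.X + Polynomial.C Cq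

lemma q_primitive : q.IsPrimitive := by
  intro r hr
  by_contra hru
  rw [q, Polynomial.C_dvd_iff_dvd_coeff] at hr
  have h0 : r ∣ Cq := by simpa using hr 0
  have h2 : r ∣ Aq := by
    have := hr 2
    simpa using this
  have hr0 : r ≠ 0 := by rintro rfl; exact hA_ne (zero_dvd_iff.mp h2)
  obtain ⟨p, hpirr, hpr⟩ := WfDvdMonoid.exists_irreducible_factor hru hr0
  have hpprime : Prime p := (UniqueFactorizationMonoid.irreducible_iff_prime).mp hpirr
  have hpC : p ∣ X 0 ^ 2 * X 1 ^ 2 := by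
    have h := hpr.trans h0
    rwa [Cq, dvd_neg] at h
  have hpA : p ∣ Aq := hpr.trans h2
  rcases hpprime.dvd_mul.mp hpC with h | h
  · have hx : p ∣ X 0 := hpprime.dvd_of_dvd_pow h
    exact not_X0_dvd_A ((hpirr.dvd_symm prime_X0.irreducible hx).trans hpA)
  · have hx : p ∣ X 1 := hpprime.dvd_of_dvd_pow h
    exact not_X1_dvd_A ((hpirr.dvd_symm prime_X1.irreducible hx).trans hpA)

lemma q_irreducible : Irreducible q := by
  classical
  letI : NormalizationMonoid R2 := UniqueFactorizationMonoid.normalizationMonoid.toNormalizationMonoid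
  letI : NormalizedGCDMonoid R2 := UniqueFactorizationMonoid.toNormalizedGCDMonoid R2
  set K := FractionRing R2
  rw [q_primitive.irreducible_iff_irreducible_map_fraction_map (K := K)]
  set f := algebraMap R2 K with hf
  have hfi : Function.Injective f := IsFractionRing.injective R2 K
  have hmap : q.map f = Polynomial.C (f Aq) * Polynomial.X ^ 2
      + Polynomial.C (f Bq) * Polynomial.X + Polynomial.C (f Cq) := by
    simp [q, Polynomial.map_add, Polynomial.map_mul, Polynomial.map_pow]
  have ha : f Aq ≠ 0 := fun h => hA_ne (hfi (by simpa using h))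
  have hdeg : (q.map f).natDegree = 2 := by
    rw [hmap]; exact Polynomial.natDegree_quadratic ha
  rw [Polynomial.irreducible_iff_roots_eq_zero_of_degree_le_three (by omega) (by omega)]
  -- discriminant is not a square in K
  have hds : ∀ s : K, discrim (f Aq) (f Bq) (f Cq) ≠ s ^ 2 := by
    intro s hs
    have hd : discrim (f Aq) (f Bq) (f Cq) = f (Bq ^ 2 - 4 * Aq * Cq) := by
      rw [discrim]
      rw [map_sub, map_mul, map_mul, map_pow, map_ofNat]
    rw [hd] at hs
    have hint : IsIntegral R2 s := by
      refine ⟨Polynomial.X ^ 2 - Polynomial.C (Bq ^ 2 - 4 * Aq * Cq),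
        Polynomial.monic_X_pow_sub_C _ (by norm_num), ?_⟩
      simp [Polynomial.eval₂, ← hs, hf]
    obtain ⟨r, hrs⟩ := IsIntegrallyClosed.isIntegral_iff.mp hint
    have hr2 : r ^ 2 = Bq ^ 2 - 4 * Aq * Cq := by
      apply hfi
      rw [map_pow, hrs, ← hs]
    have := congrArg (eval ![(1 : ℚ), 2]) hr2
    rw [map_pow] at this
    simp [Aq, Bq, Cq] at this
    nlinarith [sq_nonneg (eval ![(1 : ℚ), 2] r), this]
  rw [Multiset.eq_zero_iff_forall_notMem]
  intro x hx
  have hq0 : q.map f ≠ 0 := fun h => by simp [h] at hdeg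
  rw [Polynomial.mem_roots hq0] at hx
  have hev : f Aq * (x * x) + f Bq * x + f Cq = 0 := by
    have := hx
    rw [hmap] at this
    simp [Polynomial.IsRoot] at this
    linear_combination this
  exact quadratic_ne_zero_of_discrim_ne_sq hds x hev

end

end StarBI

open StarBI

theorem star_type_BI_determinant_irreducible :
    Irreducible ((X 0) ^ 2 * (X 1) ^ 2 + (X 0) ^ 2 * X 1 * X 2
        + X 0 * (X 1) ^ 2 * X 2 - (X 0) ^ 2 * (X 2) ^ 2
        - X 0 * X 1 * (X 2) ^ 2 - (X 1) ^ 2 * (X 2) ^ 2 :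
      MvPolynomial (Fin 3) ℚ) := by
  refine (MulEquiv.irreducible_iff (finSuccEquiv ℚ 2).toMulEquiv).mp ?_
  have e1 : finSuccEquiv ℚ 2 (X 1) = Polynomial.C (X 0) := by
    have h : (X 1 : MvPolynomial (Fin 3) ℚ) = X (Fin.succ 0) := rfl
    rw [h, finSuccEquiv_X_succ]
  have e2 : finSuccEquiv ℚ 2 (X 2) = Polynomial.C (X 1) := by
    have h : (X 2 : MvPolynomial (Fin 3) ℚ) = X (Fin.succ 1) := rfl
    rw [h, finSuccEquiv_X_succ]
  have hP : (finSuccEquiv ℚ 2).toMulEquiv ((X 0) ^ 2 * (X 1) ^ 2 + (X 0) ^ 2 * X 1 * X 2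
        + X 0 * (X 1) ^ 2 * X 2 - (X 0) ^ 2 * (X 2) ^ 2
        - X 0 * X 1 * (X 2) ^ 2 - (X 1) ^ 2 * (X 2) ^ 2 :
      MvPolynomial (Fin 3) ℚ) = q := by
    show (finSuccEquiv ℚ 2) _ = q
    simp only [map_add, map_sub, map_mul, map_pow, finSuccEquiv_X_zero, e1, e2]
    rw [q, Aq, Bq, Cq]
    simp only [map_add, map_sub, map_mul, map_pow, map_neg]
    ring
  rw [hP]
  exact q_irreducible
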